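/- For polynomials with right coefficients in a real alternative *-algebra A, the star product coincides with the slice product: if p(x) = Σ_{k} x^k c_k and q(x) = Σ_h x^h d_h, then the slice function p · q (induced by the pointwise product of the stem functions P(z) = Σ z^k c_k and Q(z) = Σ z^h d_h) equals the star product (p * q)(x) = Σ_j x^j (Σ_{k+h=j} c_k d_h) on the quadratic cone Q_A. -/

import Mathlib

variable {A : Type*} [NonAssocRing A] [Module ℝ A] [StarRing A]

/-- The quadratic cone of a real alternative *-algebra. -/
def QCone (x : A) : Prop :=
  (∃ r : ℝ, x = r • (1 : A)) ∨
  (∃ t n : ℝ, x + star x = t • (1 : A) ∧ x * star x = n • (1 : A) ∧ t ^ 2 - 4 * n < 0)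

/-- Square roots of `-1` in the quadratic cone. -/
def SqrtNegOne (J : A) : Prop := QCone J ∧ J * J = -1

/-- Powers in a not necessarily associative algebra. -/
def npow (x : A) : ℕ → A
  | 0 => 1
  | n + 1 => npow x n * x

/-- Reindexing a truncated double sum as a sum over antidiagonals. -/
lemma sum_range_antidiagonal_eq {M : Type*} [AddCommMonoid M] (G : ℕ → ℕ → M) (n m : ℕ)
    (hG1 : ∀ k h, n < k → G k h = 0) (hG2 : ∀ k h, m < h → G k h = 0) :
    ∑ j ∈ Finset.range (n + m + 1), ∑ p ∈ Finset.HasAntidiagonal.antidiagonal j, G p.1 p.2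
      = ∑ k ∈ Finset.range (n + 1), ∑ h ∈ Finset.range (m + 1), G k h := by
  have hstep : ∀ j : ℕ, ∑ p ∈ Finset.HasAntidiagonal.antidiagonal j, G p.1 p.2
      = ∑ k ∈ Finset.range (j + 1), G k (j - k) := by
    intro j
    exact Finset.Nat.sum_antidiagonal_eq_sum_range_succ_mk _ j
  rw [Finset.sum_congr rfl fun j _ => hstep j, Finset.sum_range_diag_flip]
  rw [← Finset.sum_subset (Finset.range_subset_range.2 (by omega) :
      Finset.range (n + 1) ⊆ Finset.range (n + m + 1))
    (fun k _ hk => Finset.sum_eq_zero fun h _ =>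
      hG1 k h (by simpa using hk))]
  refine Finset.sum_congr rfl fun k hk => ?_
  have hkn : k ≤ n := by simpa [Nat.lt_succ_iff] using hk
  rw [← Finset.sum_subset (Finset.range_subset_range.2 (by omega) :
      Finset.range (m + 1) ⊆ Finset.range (n + m + 1 - k))
    (fun h _ hh => hG2 k h (by simpa using hh))]

/-- For polynomials with right coefficients, the slice product (induced by the
pointwise product of stem functions) equals the star product. -/
theorem star_product_eq_slice_product [StarModule ℝ A] [IsScalarTower ℝ A A]
    [SMulCommClass ℝ A A] [FiniteDimensional ℝ A]
    (h1 : ∀ x y : A, (x * x) * y = x * (x * y))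
    (h2 : ∀ x y : A, (y * x) * x = y * (x * x))
    (hone : (1 : A) ≠ 0)
    (c d : ℕ → A) (n m : ℕ)
    (hc : ∀ k : ℕ, n < k → c k = 0) (hd : ∀ k : ℕ, m < k → d k = 0)
    (J : A) (hJ : SqrtNegOne J) (r s : ℝ) :
    ∀ (z : ℂ) (x : A), z = (r : ℂ) + s * Complex.I → x = r • (1 : A) + s • J →
      ((∑ k ∈ Finset.range (n + 1), (z ^ k).re • c k) *
          (∑ k ∈ Finset.range (m + 1), (z ^ k).re • d k)
        - (∑ k ∈ Finset.range (n + 1), (z ^ k).im • c k) *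
            (∑ k ∈ Finset.range (m + 1), (z ^ k).im • d k))
      + J * ((∑ k ∈ Finset.range (n + 1), (z ^ k).re • c k) *
              (∑ k ∈ Finset.range (m + 1), (z ^ k).im • d k)
            + (∑ k ∈ Finset.range (n + 1), (z ^ k).im • c k) *
                (∑ k ∈ Finset.range (m + 1), (z ^ k).re • d k))
      = ∑ j ∈ Finset.range (n + m + 1),
          npow x j * (∑ p ∈ Finset.HasAntidiagonal.antidiagonal j, c p.1 * d p.2) := by
  intro z x hz hx
  obtain ⟨-, hJJ⟩ := hJ
  have hzre : z.re = r := by simp [hz]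
  have hzim : z.im = s := by simp [hz]
  -- powers of x
  have hxpow : ∀ j : ℕ, npow x j = (z ^ j).re • (1 : A) + (z ^ j).im • J := by
    intro j
    induction j with
    | zero => simp [npow]
    | succ j ih =>
      rw [npow, ih, hx, pow_succ, Complex.mul_re, Complex.mul_im, hzre, hzim]
      simp only [mul_add, add_mul, smul_mul_assoc, mul_smul_comm, smul_smul,
        one_mul, mul_one, hJJ, smul_neg, sub_smul, add_smul]
      module
  -- the key double-sum term
  set G : ℕ → ℕ → A := fun k h =>
    (z ^ (k + h)).re • (c k * d h) + (z ^ (k + h)).im • (J * (c k * d h)) with hG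
  have hG1 : ∀ k h, n < k → G k h = 0 := by
    intro k h hk; simp [hG, hc k hk]
  have hG2 : ∀ k h, m < h → G k h = 0 := by
    intro k h hh; simp [hG, hd h hh]
  -- right hand side
  have hrhs : ∑ j ∈ Finset.range (n + m + 1),
      npow x j * (∑ p ∈ Finset.HasAntidiagonal.antidiagonal j, c p.1 * d p.2)
      = ∑ k ∈ Finset.range (n + 1), ∑ h ∈ Finset.range (m + 1), G k h := by
    rw [← sum_range_antidiagonal_eq G n m hG1 hG2]
    refine Finset.sum_congr rfl fun j _ => ?_
    rw [hxpow j, add_mul, smul_mul_assoc, one_mul, smul_mul_assoc, Finset.mul_sum,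
      Finset.smul_sum, Finset.smul_sum, ← Finset.sum_add_distrib]
    refine Finset.sum_congr rfl fun p hp => ?_
    have hpj : p.1 + p.2 = j := Finset.HasAntidiagonal.mem_antidiagonal.mp hp
    simp [hG, hpj, mul_smul_comm]
  rw [hrhs]
  -- left hand side
  rw [Finset.sum_mul_sum, Finset.sum_mul_sum, Finset.sum_mul_sum, Finset.sum_mul_sum,
    ← Finset.sum_add_distrib, Finset.mul_sum, ← Finset.sum_sub_distrib, ← Finset.sum_add_distrib]
  refine Finset.sum_congr rfl fun k _ => ?_
  rw [← Finset.sum_add_distrib, Finset.mul_sum, ← Finset.sum_sub_distrib, ← Finset.sum_add_distrib]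
  refine Finset.sum_congr rfl fun h _ => ?_
  simp only [hG, mul_add, smul_mul_assoc, mul_smul_comm, smul_smul, pow_add,
    Complex.mul_re, Complex.mul_im, sub_smul, add_smul]
  module
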